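/- Let t be the Thue-Morse sequence and let n ≥ 1 be an odd integer. Suppose x, y, j are nonnegative integers with 0 < j < n, t(n·x) = t(n·y), and t(n·x + j) ≠ t(n·y + j). Then there exist a nonnegative integer m and an integer z with 0 ≤ z < 2^m such that t(n·(x·2^m + z)) ≠ t(n·(y·2^m + z)). -/

import Mathlib

/-- The Thue-Morse sequence: number of 1s in the binary expansion, mod 2. -/
def thueMorse (i : ℕ) : ℕ := (Nat.digits 2 i).count 1 % 2

lemma thueMorse_lt_two (i : ℕ) : thueMorse i < 2 := Nat.mod_lt _ two_pos

lemma thueMorse_split (a b m : ℕ) (hb : b < 2 ^ m) :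
    thueMorse (a * 2 ^ m + b) = (thueMorse a + thueMorse b) % 2 := by
  rcases Nat.eq_zero_or_pos a with rfl | ha
  · simp [thueMorse]
  have hlen : (Nat.digits 2 b).length ≤ m := by
    rcases Nat.eq_zero_or_pos b with rfl | hb0
    · simp
    · have h1 : 2 ^ (Nat.digits 2 b).length ≤ 2 * b :=
        Nat.base_pow_length_digits_le 2 b one_lt_two hb0.ne'
      have h2 : 2 * b < 2 ^ (m + 1) := by
        rw [pow_succ, mul_comm]; omega
      have := h1.trans_lt h2
      exact Nat.lt_succ_iff.mp (Nat.pow_lt_pow_iff_right one_lt_two |>.mp this)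
  have key := Nat.digits_append_zeroes_append_digits
    (b := 2) (k := m - (Nat.digits 2 b).length) (m := a) (n := b) one_lt_two ha
  rw [Nat.add_sub_cancel' hlen] at key
  have : a * 2 ^ m + b = b + 2 ^ m * a := by ring
  rw [thueMorse, this, ← key]
  simp [thueMorse, List.count_append, Nat.add_mod, List.count_replicate, add_comm]

theorem thueMorse_distinguishing_suffix (n x y j : ℕ)
    (hodd : Odd n) (hn : 1 ≤ n) (hj0 : 0 < j) (hjn : j < n)
    (h0 : thueMorse (n * x) = thueMorse (n * y))
    (hj : thueMorse (n * x + j) ≠ thueMorse (n * y + j)) :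
    ∃ m z : ℕ, z < 2 ^ m ∧
      thueMorse (n * (x * 2 ^ m + z)) ≠ thueMorse (n * (y * 2 ^ m + z)) := by
  -- choose m with n ≤ 2^m
  obtain ⟨m, hm⟩ : ∃ m, n ≤ 2 ^ m := ⟨n, (Nat.lt_two_pow_self (n := n)) |>.le⟩
  set A := j * 2 ^ m with hA
  -- z = ⌈A / n⌉
  set z := (A + n - 1) / n with hz
  have hdm := Nat.div_add_mod (A + n - 1) n
  have hr : (A + n - 1) % n < n := Nat.mod_lt _ (by omega)
  have h1 : A ≤ n * z ∧ n * z < A + n := by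
    rw [hz]; omega
  -- so n*z = A + r with r < n ≤ 2^m
  set r := n * z - A with hrdef
  have hnz : n * z = j * 2 ^ m + r := by omega
  have hr2 : r < 2 ^ m := by omega
  refine ⟨m, z, ?_, ?_⟩
  · have : n * z < (j + 1) * 2 ^ m := by
      have : (j + 1) * 2 ^ m = j * 2 ^ m + 2 ^ m := by ring
      omega
    have hle : (j + 1) * 2 ^ m ≤ n * 2 ^ m :=
      Nat.mul_le_mul_right _ (by omega)
    have := lt_of_lt_of_le this hle
    exact lt_of_mul_lt_mul_left this (Nat.zero_le n)
  · have ex : n * (x * 2 ^ m + z) = (n * x + j) * 2 ^ m + r := by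
      rw [Nat.mul_add, ← Nat.mul_assoc, hnz]; ring
    have ey : n * (y * 2 ^ m + z) = (n * y + j) * 2 ^ m + r := by
      rw [Nat.mul_add, ← Nat.mul_assoc, hnz]; ring
    rw [ex, ey, thueMorse_split _ _ _ hr2, thueMorse_split _ _ _ hr2]
    have t1 := thueMorse_lt_two (n * x + j)
    have t2 := thueMorse_lt_two (n * y + j)
    have t3 := thueMorse_lt_two r
    omega
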